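/- Let G be a group acting on a set X. Let Conj_G(X) = {[G_x] : x ∈ X} be the set of conjugacy classes of point stabilizers. Then Aut_G(X) is isomorphic to the direct product, over all [H] ∈ Conj_G(X), of the unrestricted wreath products (N_G(H)/H) ≀ Sym(O_[H]), where O_[H] is the set of G-orbits whose point stabilizers are conjugate to H. -/

import Mathlib

/-- The monoid of all `G`-equivariant transformations of `X`, as a submonoid of
`Function.End X` (composition of functions). -/
def gEnd (G X : Type*) [Group G] [MulAction G X] : Submonoid (Function.End X) where
  carrier := {f | ∀ (g : G) (x : X), f (g • x) = g • f x}
  one_mem' := fun _ _ => rfl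
  mul_mem' := fun {f₁ f₂} h₁ h₂ g x => by
    show f₁ (f₂ (g • x)) = g • f₁ (f₂ x)
    rw [h₂, h₁]

/-- The group of all bijective `G`-equivariant transformations of `X`, as a subgroup of
`Equiv.Perm X`. -/
def gAut (G X : Type*) [Group G] [MulAction G X] : Subgroup (Equiv.Perm X) where
  carrier := {f | ∀ (g : G) (x : X), f (g • x) = g • f x}
  one_mem' := fun _ _ => rfl
  mul_mem' := fun {f₁ f₂} h₁ h₂ g x => by
    show f₁ (f₂ (g • x)) = g • f₁ (f₂ x)
    rw [h₂, h₁]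
  inv_mem' := fun {f} hf g x => f.injective (by
    rw [Equiv.Perm.inv_def, Equiv.apply_symm_apply, hf, Equiv.apply_symm_apply])

/-- The conjugate subgroup `g K g⁻¹`. -/
def conjSub {G : Type*} [Group G] (g : G) (K : Subgroup G) : Subgroup G :=
  Subgroup.map (MulAut.conj g).toMonoidHom K

/-- The set `O_[H]` of `G`-orbits of `X` whose point stabilizers are conjugate to `H`. -/
def classOrbits (G X : Type*) [Group G] [MulAction G X] (H : Subgroup G) : Set (Set X) :=
  {s | ∃ y : X, (∃ g : G, MulAction.stabilizer G y = conjSub g H) ∧ s = MulAction.orbit G y}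

/-- The quotient `N_G(H)/H` of the normalizer of `H` by `H`. -/
abbrev normQuot {G : Type*} [Group G] (H : Subgroup G) :=
  Subgroup.normalizer (H : Set G) ⧸ H.subgroupOf (Subgroup.normalizer (H : Set G))

/-- The action of `Sym(Δ)` on `K^Δ` permuting the coordinates, as a homomorphism
into the automorphism group of the direct product `K^Δ`; it is used to form the
unrestricted wreath product `K ≀ Sym(Δ) = K^Δ ⋊ Sym(Δ)`. -/
def permCoordAut (K Δ : Type*) [Group K] : Equiv.Perm Δ →* MulAut (Δ → K) where
  toFun σ :=
    { toFun := fun f => f ∘ σ.symm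
      invFun := fun f => f ∘ σ
      left_inv := fun f => by funext δ; simp
      right_inv := fun f => by funext δ; simp
      map_mul' := fun f g => rfl }
  map_one' := by ext f δ; rfl
  map_mul' := fun σ τ => by ext f δ; rfl

namespace Stmt8Aux
variable {G : Type*} [Group G]

/-- right multiplication by a normalizer element on `G ⧸ H` -/
def qmulFun {H : Subgroup G} (n : (Subgroup.normalizer (H : Set G))) : G ⧸ H → G ⧸ H :=
  Quotient.map' (· * (n : G)) (fun a b hab => by
    rw [QuotientGroup.leftRel_apply] at *
    have h1 : (n : G)⁻¹ * (a⁻¹ * b) * ((n:G)⁻¹)⁻¹ ∈ H :=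
      (Subgroup.mem_normalizer_iff.mp ((Subgroup.normalizer (H : Set G)).inv_mem n.2) _).mp hab
    simpa [mul_assoc] using h1)

lemma qmulFun_mk {H : Subgroup G} (n : (Subgroup.normalizer (H : Set G))) (g : G) :
    qmulFun n (g : G ⧸ H) = ((g * n : G) : G ⧸ H) := rfl

/-- right translation of `G ⧸ H` by an element of `N_G(H) ⧸ H`. -/
def qmul {H : Subgroup G} (c : G ⧸ H) (η : normQuot H) : G ⧸ H :=
  Quotient.liftOn' η (fun n => qmulFun n c) (by
    intro n m hnm
    rw [QuotientGroup.leftRel_apply, Subgroup.mem_subgroupOf] at hnm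
    induction c using Quotient.inductionOn' with
    | h g =>
      show qmulFun n (g : G ⧸ H) = qmulFun m (g : G ⧸ H)
      rw [qmulFun_mk, qmulFun_mk]
      rw [QuotientGroup.eq]
      simpa [mul_assoc] using hnm)

lemma qmul_mk {H : Subgroup G} (g : G) (n : (Subgroup.normalizer (H : Set G))) :
    qmul (g : G ⧸ H) (QuotientGroup.mk n : normQuot H) = ((g * n : G) : G ⧸ H) := rfl

lemma smul_qmul {H : Subgroup G} (g : G) (c : G ⧸ H) (η : normQuot H) :
    g • qmul c η = qmul (g • c) η := by
  induction η using Quotient.inductionOn' with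
  | h n =>
    induction c using Quotient.inductionOn' with
    | h a =>
      show g • qmul (a : G ⧸ H) _ = qmul ((g * a : G) : G ⧸ H) _
      rw [qmul_mk, qmul_mk]
      show ((g * (a * n) : G) : G ⧸ H) = _
      rw [mul_assoc]

lemma qmul_one {H : Subgroup G} (c : G ⧸ H) : qmul c (1 : normQuot H) = c := by
  induction c using Quotient.inductionOn' with
  | h a => show qmul _ (QuotientGroup.mk 1) = _; rw [qmul_mk]; simp

lemma qmul_mul {H : Subgroup G} (c : G ⧸ H) (η θ : normQuot H) :
    qmul (qmul c η) θ = qmul c (η * θ) := by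
  induction η using Quotient.inductionOn' with
  | h n =>
    induction θ using Quotient.inductionOn' with
    | h m =>
      induction c using Quotient.inductionOn' with
      | h a =>
        show qmul (qmul _ (QuotientGroup.mk n)) (QuotientGroup.mk m)
            = qmul _ (QuotientGroup.mk (n * m))
        rw [qmul_mk, qmul_mk, qmul_mk]
        rw [Subgroup.coe_mul, mul_assoc]

lemma qmul_eq_self {H : Subgroup G} (c : G ⧸ H) (η : normQuot H) (h : qmul c η = c) :
    η = 1 := by
  induction η using Quotient.inductionOn' with
  | h n =>
    induction c using Quotient.inductionOn' with
    | h a =>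
      rw [show (Quotient.mk'' a : G ⧸ H) = (a : G ⧸ H) from rfl] at h
      rw [show (Quotient.mk'' n : normQuot H) = (QuotientGroup.mk n) from rfl] at h
      rw [qmul_mk, QuotientGroup.eq] at h
      have : (n : G) ∈ H := by simpa using h
      show QuotientGroup.mk n = _
      rw [QuotientGroup.eq_one_iff]
      simpa [Subgroup.mem_subgroupOf] using this


/-- The model block: `Δ × G ⧸ H` with `G` acting on the second coordinate. -/
def Blk (G : Type*) [Group G] (H : Subgroup G) (Δ : Type*) := Δ × (G ⧸ H)

instance (H : Subgroup G) (Δ : Type*) : MulAction G (Blk G H Δ) where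
  smul g p := (p.1, g • p.2)
  one_smul p := by show (p.1, _) = p; rw [one_smul]; rfl
  mul_smul g h p := by show (p.1, _) = (p.1, _); rw [mul_smul]; rfl

lemma Blk.smul_def {H : Subgroup G} {Δ : Type*} (g : G) (p : Blk G H Δ) :
    g • p = (p.1, g • p.2) := rfl

/-- Constructor for `Blk`. -/
def Blk.mk {H : Subgroup G} {Δ : Type*} (δ : Δ) (c : G ⧸ H) : Blk G H Δ := (δ, c)

lemma Blk.smul_mk {H : Subgroup G} {Δ : Type*} (g : G) (δ : Δ) (c : G ⧸ H) :
    g • (Blk.mk δ c) = Blk.mk δ (g • c) := rfl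

lemma Blk.eta {H : Subgroup G} {Δ : Type*} (p : Blk G H Δ) : Blk.mk p.1 p.2 = p := rfl

lemma Blk.mk_inj {H : Subgroup G} {Δ : Type*} {δ δ' : Δ} {c c' : G ⧸ H}
    (h1 : δ = δ') (h2 : c = c') : Blk.mk δ c = Blk.mk δ' c' := by rw [h1, h2]


section Blk
variable {H : Subgroup G} {Δ : Type*}

/-- The permutation of the block induced by a wreath product element. -/
def blkPerm (w : (Δ → normQuot H) ⋊[permCoordAut (normQuot H) Δ] Equiv.Perm Δ) :
    Equiv.Perm (Blk G H Δ) where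
  toFun p := (w.right p.1, qmul p.2 (w.left (w.right p.1))⁻¹)
  invFun p := (w.right⁻¹ p.1, qmul p.2 (w.left p.1))
  left_inv p := by
    show (w.right⁻¹ (w.right p.1), qmul (qmul p.2 _) _) = p
    rw [qmul_mul, inv_mul_cancel, qmul_one]
    show (w.right.symm (w.right p.1), p.2) = p
    rw [Equiv.symm_apply_apply]
    rfl
  right_inv p := by
    show (w.right (w.right⁻¹ p.1), qmul (qmul p.2 _) _) = p
    have h1 : w.right (w.right⁻¹ p.1) = p.1 := by
      show w.right (w.right.symm p.1) = p.1
      rw [Equiv.apply_symm_apply]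
    rw [h1, qmul_mul, mul_inv_cancel, qmul_one]
    rfl

lemma blkPerm_apply (w : (Δ → normQuot H) ⋊[permCoordAut (normQuot H) Δ] Equiv.Perm Δ)
    (p : Blk G H Δ) : blkPerm w p = (w.right p.1, qmul p.2 (w.left (w.right p.1))⁻¹) := rfl

/-- `blkPerm` as a monoid hom into `gAut`. -/
def blkHom : ((Δ → normQuot H) ⋊[permCoordAut (normQuot H) Δ] Equiv.Perm Δ) →*
    gAut G (Blk G H Δ) where
  toFun w := ⟨blkPerm w, by
    intro g p
    show blkPerm w (Blk.mk p.1 (g • p.2)) = g • blkPerm w p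
    rw [blkPerm_apply, blkPerm_apply]
    show (w.right p.1, qmul (g • p.2) (w.left (w.right p.1))⁻¹)
      = (w.right p.1, g • qmul p.2 (w.left (w.right p.1))⁻¹)
    rw [← smul_qmul]⟩
  map_one' := by
    ext p
    show blkPerm 1 p = p
    rw [blkPerm_apply]
    show (p.1, qmul p.2 (1 : normQuot H)⁻¹) = p
    rw [inv_one, qmul_one]
    rfl
  map_mul' w₁ w₂ := by
    ext p
    show blkPerm (w₁ * w₂) p = blkPerm w₁ (blkPerm w₂ p)
    rw [blkPerm_apply, blkPerm_apply, blkPerm_apply]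
    show (_, qmul p.2 _) = (_, qmul (qmul p.2 _) _)
    rw [qmul_mul]
    congr 1
    rw [SemidirectProduct.mul_left, SemidirectProduct.mul_right]
    show qmul p.2 ((w₁.left _ * ((permCoordAut (normQuot H) Δ w₁.right) w₂.left) _)⁻¹) = _
    rw [mul_inv_rev]
    congr 2
    exact congrArg (·⁻¹) (congrArg w₂.left (Equiv.symm_apply_apply w₁.right (w₂.right p.1)))

lemma blkHom_injective : Function.Injective (blkHom (G := G) (H := H) (Δ := Δ)) := by
  intro w₁ w₂ h
  have key : ∀ (w : (Δ → normQuot H) ⋊[permCoordAut (normQuot H) Δ] Equiv.Perm Δ),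
      blkHom w = 1 → w = 1 := by
    intro w hw
    have hperm : ∀ p : Blk G H Δ, blkPerm w p = p := by
      intro p
      have hw' : (blkPerm w : Equiv.Perm (Blk G H Δ)) = 1 := congrArg Subtype.val hw
      exact Equiv.ext_iff.mp hw' p
    have hσ : w.right = 1 := by
      ext δ
      have := congrArg Prod.fst (hperm (δ, ((1:G) : G ⧸ H)))
      exact this
    have hf : w.left = 1 := by
      funext δ
      have h2 := congrArg Prod.snd (hperm (Blk.mk (w.right.symm δ) ((1:G) : G ⧸ H)))
      change qmul ((1:G) : G ⧸ H) (w.left (w.right (w.right.symm δ)))⁻¹ = ((1:G) : G ⧸ H) at h2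
      have h3 : w.right (w.right.symm δ) = δ := Equiv.apply_symm_apply _ _
      rw [h3] at h2
      have := qmul_eq_self _ _ h2
      have := inv_eq_one.mp this
      exact this
    exact SemidirectProduct.ext hf hσ
  have := key (w₁ * w₂⁻¹) (by rw [map_mul, map_inv, h, mul_inv_cancel])
  exact mul_inv_eq_one.mp this


lemma smul_one_eq {g : G} {H : Subgroup G} : g • (((1:G)) : G ⧸ H) = (g : G ⧸ H) := by
  show ((g * 1 : G) : G ⧸ H) = (g : G ⧸ H)
  rw [mul_one]

lemma blkHom_surjective : Function.Surjective (blkHom (G := G) (H := H) (Δ := Δ)) := by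
  rintro ⟨τ, hτ⟩
  have hτ' : ∀ (g : G) (p : Blk G H Δ), τ (g • p) = g • τ p := hτ
  have hτinv : ∀ (g : G) (p : Blk G H Δ), τ⁻¹ (g • p) = g • τ⁻¹ p :=
    (gAut G (Blk G H Δ)).inv_mem hτ
  -- first components do not depend on the coset
  have hfst : ∀ (ρ : Equiv.Perm (Blk G H Δ)), (∀ (g : G) (p : Blk G H Δ), ρ (g • p) = g • ρ p) →
      ∀ (δ : Δ) (cc : G ⧸ H), (ρ (Blk.mk δ cc)).1 = (ρ (Blk.mk δ ((1:G) : G ⧸ H))).1 := by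
    intro ρ hρ δ cc
    induction cc using Quotient.inductionOn' with
    | h g =>
      have h1 : Blk.mk δ (Quotient.mk'' g : G ⧸ H) = g • (Blk.mk δ ((1:G) : G ⧸ H)) := by
        rw [Blk.smul_mk, smul_one_eq]
      rw [h1]
      rw [hρ]
      rfl
  set c : Δ → G ⧸ H := fun δ => (τ (Blk.mk δ ((1:G) : G ⧸ H))).2 with hc
  set ε : Δ → Δ := fun δ => (τ (Blk.mk δ ((1:G) : G ⧸ H))).1 with hε
  set ε' : Δ → Δ := fun δ => (τ⁻¹ (Blk.mk δ ((1:G) : G ⧸ H))).1 with hε'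
  have hτδ : ∀ δ, τ (Blk.mk δ ((1:G) : G ⧸ H)) = Blk.mk (ε δ) (c δ) := fun δ => rfl
  have hleft : ∀ δ, ε' (ε δ) = δ := by
    intro δ
    have h1 : ε' (ε δ) = (τ⁻¹ (Blk.mk (ε δ) (c δ))).1 := (hfst _ hτinv (ε δ) (c δ)).symm
    rw [h1, ← hτδ]
    have h2 : τ⁻¹ (τ (Blk.mk δ ((1:G) : G ⧸ H))) = Blk.mk δ ((1:G) : G ⧸ H) :=
      Equiv.symm_apply_apply τ _
    rw [h2]
    rfl
  have hright : ∀ δ, ε (ε' δ) = δ := by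
    intro δ
    have h1 : ε (ε' δ) = (τ (Blk.mk (ε' δ) ((τ⁻¹ (Blk.mk δ ((1:G) : G ⧸ H))).2))).1 :=
      (hfst _ hτ' (ε' δ) _).symm
    rw [h1]
    have h2 : Blk.mk (ε' δ) ((τ⁻¹ (Blk.mk δ ((1:G) : G ⧸ H))).2)
        = τ⁻¹ (Blk.mk δ ((1:G) : G ⧸ H)) := rfl
    rw [h2]
    have h3 : τ (τ⁻¹ (Blk.mk δ ((1:G) : G ⧸ H))) = Blk.mk δ ((1:G) : G ⧸ H) :=
      Equiv.apply_symm_apply τ _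
    rw [h3]
    rfl
  set σ : Equiv.Perm Δ := ⟨ε, ε', hleft, hright⟩ with hσ
  -- the cosets c δ have stabilizer H, hence come from the normalizer
  have hstab : ∀ (δ : Δ) (g : G), g • c δ = c δ ↔ g ∈ H := by
    intro δ g
    constructor
    · intro hg
      have h1 : g • (Blk.mk (ε δ) (c δ)) = Blk.mk (ε δ) (c δ) := by
        rw [Blk.smul_mk, hg]
      rw [← hτδ, ← hτ'] at h1
      have h2 := congrArg τ.symm h1
      rw [Equiv.symm_apply_apply, Equiv.symm_apply_apply] at h2
      have h3 : g • (((1:G)) : G ⧸ H) = ((1:G) : G ⧸ H) := congrArg Prod.snd h2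
      rw [smul_one_eq, QuotientGroup.eq] at h3
      simpa using h3
    · intro hg
      have h0 : g • (((1:G)) : G ⧸ H) = ((1:G) : G ⧸ H) := by
        rw [smul_one_eq, QuotientGroup.eq]
        simpa using hg
      have h1 : g • (Blk.mk δ ((1:G) : G ⧸ H)) = Blk.mk δ ((1:G) : G ⧸ H) := by
        rw [Blk.smul_mk, h0]
      have h2 := congrArg (fun p => τ p) h1
      rw [hτ'] at h2
      exact congrArg Prod.snd h2
  -- representatives in the normalizer
  have hnorm : ∀ δ : Δ, ∃ nn : (Subgroup.normalizer (H : Set G)), ((nn : G) : G ⧸ H) = c δ := by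
    intro δ
    obtain ⟨a, ha⟩ := Quotient.exists_rep (c δ)
    have ha' : (a : G ⧸ H) = c δ := ha
    have key : ∀ g : G, a⁻¹ * g⁻¹ * a ∈ H ↔ g ∈ H := by
      intro g
      have hs := hstab δ g
      rw [← ha'] at hs
      constructor
      · intro h
        apply hs.mp
        show ((g * a : G) : G ⧸ H) = (a : G ⧸ H)
        rw [QuotientGroup.eq]
        simpa [mul_assoc, mul_inv_rev] using h
      · intro h
        have h2 := hs.mpr h
        have h3 : ((g * a : G) : G ⧸ H) = (a : G ⧸ H) := h2
        rw [QuotientGroup.eq] at h3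
        simpa [mul_assoc, mul_inv_rev] using h3
    have hmemInv : a⁻¹ ∈ (Subgroup.normalizer (H : Set G)) := by
      rw [Subgroup.mem_normalizer_iff]
      intro h
      have k := key h⁻¹
      rw [inv_inv, Subgroup.inv_mem_iff] at k
      constructor
      · intro hh
        simpa [mul_assoc, inv_inv] using k.mpr hh
      · intro hh
        apply k.mp
        simpa [mul_assoc, inv_inv] using hh
    have hmem : a ∈ (Subgroup.normalizer (H : Set G)) := by
      have := (Subgroup.normalizer (H : Set G)).inv_mem hmemInv
      simpa using this
    exact ⟨⟨a, hmem⟩, ha'⟩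
  choose n hn using hnorm
  set w : (Δ → normQuot H) ⋊[permCoordAut (normQuot H) Δ] Equiv.Perm Δ :=
    ⟨fun δ' => (QuotientGroup.mk (n (σ.symm δ')) : normQuot H)⁻¹, σ⟩ with hw
  have main : ∀ (δ : Δ) (cc : G ⧸ H), blkPerm w (Blk.mk δ cc) = τ (Blk.mk δ cc) := by
    intro δ cc
    induction cc using Quotient.inductionOn' with
    | h g =>
      rw [blkPerm_apply]
      show Blk.mk (σ δ) (qmul (Quotient.mk'' g : G ⧸ H) ((w.left (σ δ))⁻¹)) = _
      have e1 : (w.left (σ δ))⁻¹ = (QuotientGroup.mk (n δ) : normQuot H) := by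
        show ((QuotientGroup.mk (n (σ.symm (σ δ))) : normQuot H)⁻¹)⁻¹ = _
        rw [inv_inv, Equiv.symm_apply_apply]
      rw [e1, show (Quotient.mk'' g : G ⧸ H) = (g : G ⧸ H) from rfl, qmul_mk]
      have e3 : (Blk.mk δ (Quotient.mk'' g) : Blk G H Δ) = g • Blk.mk δ ((1:G) : G ⧸ H) := by
        rw [Blk.smul_mk, smul_one_eq]
      rw [e3, hτ', hτδ, Blk.smul_mk]
      apply Blk.mk_inj rfl
      rw [← hn δ]
      rfl
  refine ⟨w, ?_⟩
  apply Subtype.ext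
  apply Equiv.ext
  intro p
  rw [← Blk.eta p]
  exact main p.1 p.2

/-- The per-block isomorphism. -/
noncomputable def blkEquiv (H : Subgroup G) (Δ : Type*) :
    ((Δ → normQuot H) ⋊[permCoordAut (normQuot H) Δ] Equiv.Perm Δ) ≃*
      gAut G (Blk G H Δ) :=
  MulEquiv.ofBijective blkHom ⟨blkHom_injective, blkHom_surjective⟩

end Blk

section SigmaPart

variable {ι' : Type*} {Y : ι' → Type*} [∀ i, MulAction G (Y i)]

lemma sigma_smul_mk (g : G) (i : ι') (y : Y i) :
    g • (⟨i, y⟩ : Σ j, Y j) = ⟨i, g • y⟩ := rfl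

/-- Extract the second component along a proof that the first component is `i`. -/
def extract {i : ι'} {p : Σ j, Y j} (h : p.1 = i) : Y i := h ▸ p.2

lemma mk_extract {i : ι'} {p : Σ j, Y j} (h : p.1 = i) :
    (⟨i, extract h⟩ : Σ j, Y j) = p := by
  rcases p with ⟨j, y⟩
  cases h
  rfl

lemma extract_eq {i : ι'} {y : Y i} {p : Σ j, Y j} (he : p = ⟨i, y⟩) (h : p.1 = i) :
    extract h = y := by
  subst he
  rfl

lemma extract_congr {i : ι'} {p q : Σ j, Y j} (hpq : p = q) (h : p.1 = i) (h' : q.1 = i) :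
    extract h = extract h' := by
  subst hpq
  rfl

lemma extract_smul {i : ι'} (g : G) {p : Σ j, Y j} (h : p.1 = i) (h' : (g • p).1 = i) :
    extract h' = g • extract h := by
  rcases p with ⟨j, y⟩
  cases h
  rfl

/-- Combining automorphisms of the pieces into an automorphism of the disjoint union. -/
def sigmaHom : ((i : ι') → gAut G (Y i)) →* gAut G (Σ j, Y j) where
  toFun t := ⟨{ toFun := fun p => ⟨p.1, (t p.1 : Equiv.Perm (Y p.1)) p.2⟩
                invFun := fun p => ⟨p.1, ((t p.1 : Equiv.Perm (Y p.1)))⁻¹ p.2⟩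
                left_inv := fun p => by
                  show (⟨p.1, ((t p.1 : Equiv.Perm (Y p.1)))⁻¹ ((t p.1 : Equiv.Perm (Y p.1)) p.2)⟩ : Σ j, Y j) = p
                  rw [Equiv.Perm.inv_def, Equiv.symm_apply_apply]
                right_inv := fun p => by
                  show (⟨p.1, (t p.1 : Equiv.Perm (Y p.1)) (((t p.1 : Equiv.Perm (Y p.1)))⁻¹ p.2)⟩ : Σ j, Y j) = p
                  rw [Equiv.Perm.inv_def, Equiv.apply_symm_apply] },
    by
      intro g p
      show (⟨p.1, (t p.1 : Equiv.Perm (Y p.1)) (g • p.2)⟩ : Σ j, Y j) = _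
      rw [(t p.1).2 g p.2]
      rfl⟩
  map_one' := rfl
  map_mul' t₁ t₂ := rfl

lemma sigmaHom_injective : Function.Injective (sigmaHom (G := G) (Y := Y)) := by
  intro t₁ t₂ h
  funext i
  apply Subtype.ext
  apply Equiv.ext
  intro y
  have h0 : (sigmaHom t₁ : Equiv.Perm (Σ j, Y j)) = (sigmaHom t₂ : Equiv.Perm (Σ j, Y j)) :=
    congrArg Subtype.val h
  have h2 : (⟨i, (t₁ i : Equiv.Perm (Y i)) y⟩ : Σ j, Y j)
      = ⟨i, (t₂ i : Equiv.Perm (Y i)) y⟩ := Equiv.ext_iff.mp h0 ⟨i, y⟩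
  exact sigma_mk_injective h2

lemma sigmaHom_surjective
    (hpres : ∀ τ : Equiv.Perm (Σ j, Y j), τ ∈ gAut G (Σ j, Y j) → ∀ p, (τ p).1 = p.1) :
    Function.Surjective (sigmaHom (G := G) (Y := Y)) := by
  rintro ⟨τ, hτ⟩
  have hτ' : ∀ (g : G) (p : Σ j, Y j), τ (g • p) = g • τ p := hτ
  have hτinvmem : τ⁻¹ ∈ gAut G (Σ j, Y j) := (gAut G (Σ j, Y j)).inv_mem hτ
  refine ⟨fun i =>
    ⟨{ toFun := fun y => extract (hpres τ hτ ⟨i, y⟩)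
       invFun := fun y => extract (hpres τ⁻¹ hτinvmem ⟨i, y⟩)
       left_inv := ?_
       right_inv := ?_ }, ?_⟩, ?_⟩
  · intro y
    refine extract_eq ?_ _
    rw [show (⟨i, extract (hpres τ hτ ⟨i, y⟩)⟩ : Σ j, Y j) = τ ⟨i, y⟩ from mk_extract _]
    exact Equiv.symm_apply_apply τ _
  · intro y
    refine extract_eq ?_ _
    rw [show (⟨i, extract (hpres τ⁻¹ hτinvmem ⟨i, y⟩)⟩ : Σ j, Y j) = τ⁻¹ ⟨i, y⟩ from
      mk_extract _]
    exact Equiv.apply_symm_apply τ _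
  · intro g y
    show extract (hpres τ hτ ⟨i, g • y⟩) = g • extract (hpres τ hτ ⟨i, y⟩)
    have h1 : τ (⟨i, g • y⟩ : Σ j, Y j) = g • τ ⟨i, y⟩ := hτ' g ⟨i, y⟩
    rw [extract_congr h1 (hpres τ hτ ⟨i, g • y⟩) (by rw [← h1]; exact hpres τ hτ _)]
    exact extract_smul g _ _
  · apply Subtype.ext
    apply Equiv.ext
    intro p
    show (⟨p.1, extract (hpres τ hτ ⟨p.1, p.2⟩)⟩ : Σ j, Y j) = τ p
    exact mk_extract _

end SigmaPart

section ConjLemmas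

lemma mem_conjSub {g x : G} {K : Subgroup G} : x ∈ conjSub g K ↔ g⁻¹ * x * g ∈ K := by
  simp only [conjSub, Subgroup.mem_map, MulEquiv.coe_toMonoidHom, MulAut.conj_apply]
  constructor
  · rintro ⟨k, hk, rfl⟩
    simpa [mul_assoc] using hk
  · intro h
    exact ⟨g⁻¹ * x * g, h, by group⟩

lemma conjSub_one (K : Subgroup G) : conjSub 1 K = K := by
  ext x
  simp [mem_conjSub]

lemma conjSub_conjSub (a b : G) (K : Subgroup G) :
    conjSub a (conjSub b K) = conjSub (a * b) K := by
  ext x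
  simp [mem_conjSub, mul_assoc]

lemma stabilizer_smul_eq_conjSub {X : Type*} [MulAction G X] (g : G) (x : X) :
    MulAction.stabilizer G (g • x) = conjSub g (MulAction.stabilizer G x) :=
  MulAction.stabilizer_smul_eq_stabilizer_map_conj g x

end ConjLemmas

section Transport

/-- Transport of `gAut` along an equivariant bijection. -/
def gAutCongr {X Y : Type*} [MulAction G X] [MulAction G Y] (e : X ≃ Y)
    (he : ∀ (g : G) (x : X), e (g • x) = g • e x) : gAut G X ≃* gAut G Y where
  toFun τ := ⟨(e.symm.trans (τ : Equiv.Perm X)).trans e, by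
    have hsymm : ∀ (g : G) (y : Y), e.symm (g • y) = g • e.symm y := by
      intro g y
      apply e.injective
      rw [he, e.apply_symm_apply, e.apply_symm_apply]
    intro g y
    show e ((τ : Equiv.Perm X) (e.symm (g • y))) = g • e ((τ : Equiv.Perm X) (e.symm y))
    rw [hsymm, τ.2 g, he]⟩
  invFun τ := ⟨(e.trans (τ : Equiv.Perm Y)).trans e.symm, by
    have hsymm : ∀ (g : G) (y : Y), e.symm (g • y) = g • e.symm y := by
      intro g y
      apply e.injective
      rw [he, e.apply_symm_apply, e.apply_symm_apply]
    intro g x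
    show e.symm ((τ : Equiv.Perm Y) (e (g • x))) = g • e.symm ((τ : Equiv.Perm Y) (e x))
    rw [he, τ.2 g, hsymm]⟩
  left_inv τ := by
    apply Subtype.ext
    apply Equiv.ext
    intro x
    simp
  right_inv τ := by
    apply Subtype.ext
    apply Equiv.ext
    intro y
    simp
  map_mul' τ₁ τ₂ := by
    apply Subtype.ext
    apply Equiv.ext
    intro y
    show e ((τ₁ : Equiv.Perm X) ((τ₂ : Equiv.Perm X) (e.symm y)))
        = e ((τ₁ : Equiv.Perm X) (e.symm (e ((τ₂ : Equiv.Perm X) (e.symm y)))))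
    rw [e.symm_apply_apply]

end Transport

section Stab

lemma stabilizer_blk_mk {H : Subgroup G} {Δ : Type*} (δ : Δ) (a : G) :
    MulAction.stabilizer G (Blk.mk δ ((a : G ⧸ H)) : Blk G H Δ) = conjSub a H := by
  ext k
  rw [MulAction.mem_stabilizer_iff, mem_conjSub]
  constructor
  · intro h
    have h2 : k • ((a : G ⧸ H)) = (a : G ⧸ H) := congrArg Prod.snd h
    have h3 : ((k * a : G) : G ⧸ H) = (a : G ⧸ H) := h2
    rw [QuotientGroup.eq] at h3
    have h4 := H.inv_mem h3
    simpa [mul_assoc, mul_inv_rev] using h4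
  · intro h
    show k • Blk.mk δ ((a : G ⧸ H)) = _
    rw [Blk.smul_mk]
    apply Blk.mk_inj rfl
    show ((k * a : G) : G ⧸ H) = (a : G ⧸ H)
    rw [QuotientGroup.eq]
    have h4 := H.inv_mem h
    simpa [mul_assoc, mul_inv_rev] using h4

lemma stabilizer_sigma_mk {ι' : Type*} {Y : ι' → Type*} [∀ i, MulAction G (Y i)]
    (i : ι') (y : Y i) :
    MulAction.stabilizer G (⟨i, y⟩ : Σ j, Y j) = MulAction.stabilizer G y := by
  ext k
  rw [MulAction.mem_stabilizer_iff, MulAction.mem_stabilizer_iff]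
  constructor
  · intro h
    exact sigma_mk_injective (by rw [← sigma_smul_mk]; exact h)
  · intro h
    rw [sigma_smul_mk, h]

lemma stabilizer_gAut {X : Type*} [MulAction G X] {τ : Equiv.Perm X} (hτ : τ ∈ gAut G X)
    (x : X) : MulAction.stabilizer G (τ x) = MulAction.stabilizer G x := by
  have hτ' : ∀ (g : G) (x : X), τ (g • x) = g • τ x := hτ
  have hinv : ∀ (g : G) (x : X), τ⁻¹ (g • x) = g • τ⁻¹ x := (gAut G X).inv_mem hτ
  ext k
  rw [MulAction.mem_stabilizer_iff, MulAction.mem_stabilizer_iff]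
  constructor
  · intro h
    have h2 : τ⁻¹ (k • τ x) = τ⁻¹ (τ x) := congrArg τ.symm h
    rw [hinv, Equiv.Perm.inv_def, Equiv.symm_apply_apply] at h2
    exact h2
  · intro h
    rw [← hτ', h]

end Stab

end Stmt8Aux

open Stmt8Aux

/-- `Aut_G(X)` is isomorphic to the direct product, over the distinct
conjugacy classes `[H]` of point stabilizers (here indexed by `ι` through representatives
`Hrep`), of the unrestricted wreath products `(N_G(H)/H) ≀ Sym(O_[H])`. -/
theorem stmt8 {G X : Type*} [Group G] [MulAction G X] (ι : Type*) (Hrep : ι → Subgroup G)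
    (h1 : ∀ i, ∃ x : X, MulAction.stabilizer G x = Hrep i)
    (h2 : ∀ x : X, ∃! i, ∃ g : G, MulAction.stabilizer G x = conjSub g (Hrep i)) :
    Nonempty ((gAut G X) ≃*
      ((i : ι) → ((↑(classOrbits G X (Hrep i)) → normQuot (Hrep i))
        ⋊[permCoordAut (normQuot (Hrep i)) ↑(classOrbits G X (Hrep i))]
        Equiv.Perm ↑(classOrbits G X (Hrep i))))) := by
  classical
  -- uniqueness of the class index
  have huniq : ∀ (i j : ι) (a b : G), conjSub a (Hrep i) = conjSub b (Hrep j) → i = j := by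
    intro i j a b hab
    obtain ⟨x, hx⟩ := h1 i
    have hxi : ∃ g, MulAction.stabilizer G x = conjSub g (Hrep i) :=
      ⟨1, by rw [hx, conjSub_one]⟩
    have hxj : ∃ g, MulAction.stabilizer G x = conjSub g (Hrep j) := by
      refine ⟨a⁻¹ * b, ?_⟩
      have h3 := congrArg (conjSub a⁻¹) hab
      rw [conjSub_conjSub, conjSub_conjSub, inv_mul_cancel, conjSub_one] at h3
      rw [hx, h3]
    exact (h2 x).unique hxi hxj
  -- basepoints
  have hbp : ∀ (i : ι) (s : ↥(classOrbits G X (Hrep i))),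
      ∃ b : X, MulAction.stabilizer G b = Hrep i ∧ MulAction.orbit G b = (s : Set X) := by
    intro i s
    obtain ⟨y, ⟨g, hg⟩, hs⟩ := s.2
    refine ⟨g⁻¹ • y, ?_, ?_⟩
    · rw [stabilizer_smul_eq_conjSub, hg, conjSub_conjSub, inv_mul_cancel, conjSub_one]
    · rw [MulAction.orbit_smul]
      exact hs.symm
  choose bp hbp1 hbp2 using hbp
  -- the comparison map from the model to X
  have wd : ∀ (i : ι) (s : ↥(classOrbits G X (Hrep i))) (a b : G),
      a⁻¹ * b ∈ Hrep i → a • bp i s = b • bp i s := by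
    intro i s a b hab
    rw [← hbp1 i s, MulAction.mem_stabilizer_iff] at hab
    calc a • bp i s = a • ((a⁻¹ * b) • bp i s) := by rw [hab]
    _ = b • bp i s := by rw [← mul_smul, mul_inv_cancel_left]
  set Φ : ((j : ι) × Blk G (Hrep j) ↥(classOrbits G X (Hrep j))) → X :=
    fun p => Quotient.liftOn' p.2.2 (fun a => a • bp p.1 p.2.1)
      (fun a b hab => wd p.1 p.2.1 a b (QuotientGroup.leftRel_apply.mp hab)) with hΦ
  have Φmk : ∀ (i : ι) (s : ↥(classOrbits G X (Hrep i))) (a : G),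
      Φ ⟨i, Blk.mk s ((a : G ⧸ Hrep i))⟩ = a • bp i s := fun i s a => rfl
  have repr : ∀ p : ((j : ι) × Blk G (Hrep j) ↥(classOrbits G X (Hrep j))),
      ∃ (i : ι) (s : ↥(classOrbits G X (Hrep i))) (a : G),
        p = ⟨i, Blk.mk s ((a : G ⧸ Hrep i))⟩ := by
    intro p
    obtain ⟨a, ha⟩ := Quotient.exists_rep p.2.2
    refine ⟨p.1, p.2.1, a, ?_⟩
    rw [show ((a : G ⧸ Hrep p.1)) = p.2.2 from ha]
    rfl
  have he : ∀ (g : G) (p : (j : ι) × Blk G (Hrep j) ↥(classOrbits G X (Hrep j))),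
      Φ (g • p) = g • Φ p := by
    intro g p
    obtain ⟨i, s, a, rfl⟩ := repr p
    have e1 : (g • (⟨i, Blk.mk s ((a : G ⧸ Hrep i))⟩ :
        (j : ι) × Blk G (Hrep j) ↥(classOrbits G X (Hrep j))))
        = ⟨i, Blk.mk s (((g * a : G) : G ⧸ Hrep i))⟩ := rfl
    rw [e1, Φmk, Φmk, mul_smul]
  have Φinj : Function.Injective Φ := by
    intro p q hpq
    obtain ⟨i, s, a, rfl⟩ := repr p
    obtain ⟨j, t, b, rfl⟩ := repr q
    rw [Φmk, Φmk] at hpq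
    have st1 : MulAction.stabilizer G (a • bp i s) = conjSub a (Hrep i) := by
      rw [stabilizer_smul_eq_conjSub, hbp1]
    have st2 : MulAction.stabilizer G (b • bp j t) = conjSub b (Hrep j) := by
      rw [stabilizer_smul_eq_conjSub, hbp1]
    have hij : i = j := huniq i j a b (by rw [← st1, ← st2, hpq])
    subst hij
    have hst : s = t := by
      apply Subtype.ext
      have o1 : (s : Set X) = MulAction.orbit G (a • bp i s) := by
        rw [MulAction.orbit_smul, hbp2]
      have o2 : (t : Set X) = MulAction.orbit G (b • bp i t) := by
        rw [MulAction.orbit_smul, hbp2]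
      rw [o1, o2, hpq]
    subst hst
    have hab : ((a : G ⧸ Hrep i)) = ((b : G ⧸ Hrep i)) := by
      rw [QuotientGroup.eq, ← hbp1 i s, MulAction.mem_stabilizer_iff, mul_smul]
      calc a⁻¹ • (b • bp i s) = a⁻¹ • (a • bp i s) := by rw [hpq]
      _ = bp i s := inv_smul_smul a (bp i s)
    rw [hab]
  have Φsurj : Function.Surjective Φ := by
    intro x
    obtain ⟨i, ⟨g, hg⟩, -⟩ := h2 x
    have hmem : MulAction.orbit G x ∈ classOrbits G X (Hrep i) := ⟨x, ⟨g, hg⟩, rfl⟩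
    have hx : x ∈ MulAction.orbit G (bp i ⟨MulAction.orbit G x, hmem⟩) := by
      rw [hbp2 i ⟨MulAction.orbit G x, hmem⟩]
      exact MulAction.mem_orbit_self x
    obtain ⟨g', hg'⟩ := MulAction.mem_orbit_iff.mp hx
    exact ⟨⟨i, Blk.mk ⟨MulAction.orbit G x, hmem⟩ ((g' : G ⧸ Hrep i))⟩,
      by rw [Φmk]; exact hg'⟩
  set e := Equiv.ofBijective Φ ⟨Φinj, Φsurj⟩ with hE
  -- component preservation
  have hpres : ∀ τ : Equiv.Perm ((j : ι) × Blk G (Hrep j) ↥(classOrbits G X (Hrep j))),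
      τ ∈ gAut G ((j : ι) × Blk G (Hrep j) ↥(classOrbits G X (Hrep j))) →
      ∀ p, (τ p).1 = p.1 := by
    intro τ hτ p
    obtain ⟨i, s, a, hp⟩ := repr p
    obtain ⟨j, t, b, hq⟩ := repr (τ p)
    have stp : MulAction.stabilizer G p = conjSub a (Hrep i) := by
      rw [hp, stabilizer_sigma_mk, stabilizer_blk_mk]
    have stq : MulAction.stabilizer G (τ p) = conjSub b (Hrep j) := by
      rw [hq, stabilizer_sigma_mk, stabilizer_blk_mk]
    have hstab := stabilizer_gAut hτ p
    have hji : j = i := huniq j i b a (by rw [← stq, hstab, stp])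
    have e1 : (τ p).1 = j := by rw [hq]
    have e2 : p.1 = i := by rw [hp]
    rw [e1, e2, hji]
  refine ⟨?_⟩
  have E1 := gAutCongr (G := G) e he
  have E2 := MulEquiv.ofBijective
    (sigmaHom (G := G) (Y := fun j => Blk G (Hrep j) ↥(classOrbits G X (Hrep j))))
    ⟨sigmaHom_injective, sigmaHom_surjective hpres⟩
  exact (E1.symm.trans E2.symm).trans
    (MulEquiv.piCongrRight fun i =>
      (blkEquiv (Hrep i) ↥(classOrbits G X (Hrep i))).symm)
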